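/- Let p be an odd prime and let n = 4p (i.e., r = 2). Define A = {1 + 4i : 0 ≤ i ≤ (p−1)/2} ∪ {1 + 4j + n/2 : 1 ≤ j ≤ (p−1)/2} and B = {1 − 4i : 0 ≤ i ≤ (p−1)/2} ∪ {1 − 4j + n/2 : 1 ≤ j ≤ (p−1)/2} as subsets of ℤ/nℤ, and let Ã = A ⊎ (−A) and B̃ = B ⊎ (−B) be multiset unions. Then the circulant multigraphs X̃ = Cay(ℤ/nℤ, Ã) and Ỹ = Cay(ℤ/nℤ, B̃) are isospectral but not isomorphic. -/

import Mathlib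

/-- Adjacency matrix of the circulant multigraph `Cay(ℤ/nℤ, S)`:
the `(u,v)` entry is the multiplicity of `v - u` in the connection multiset `S`. -/
def circulantAdj (n : ℕ) [NeZero n] (S : Multiset (ZMod n)) :
    Matrix (ZMod n) (ZMod n) ℂ :=
  Matrix.of fun u v => (S.count (v - u) : ℂ)

/-- The connection set `A = {1 + 4i : 0 ≤ i ≤ (p−1)/2} ∪ {1 + 4j + n/2 : 1 ≤ j ≤ (p−1)/2}`
in `ℤ/nℤ`, `n = 4p`. -/
def connA4 (n p : ℕ) : Finset (ZMod n) :=
  ((Finset.range ((p - 1) / 2 + 1)).image fun i => ((1 + 4 * i : ℕ) : ZMod n)) ∪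
  ((Finset.Icc 1 ((p - 1) / 2)).image fun j => ((1 + 4 * j + n / 2 : ℕ) : ZMod n))

/-- The connection set `B = {1 − 4i : 0 ≤ i ≤ (p−1)/2} ∪ {1 − 4j + n/2 : 1 ≤ j ≤ (p−1)/2}`
in `ℤ/nℤ`, `n = 4p`. -/
def connB4 (n p : ℕ) : Finset (ZMod n) :=
  ((Finset.range ((p - 1) / 2 + 1)).image fun i => (1 - (4 * i : ℕ) : ZMod n)) ∪
  ((Finset.Icc 1 ((p - 1) / 2)).image fun j =>
    (1 - (4 * j : ℕ) + (n / 2 : ℕ) : ZMod n))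

open Finset Polynomial

namespace Circ4pAux

/-! ### Generic circulant matrix lemmas -/

section Generic

variable {n : ℕ} [NeZero n]

lemma msum_eq (S : Multiset (ZMod n)) (f : ZMod n → ℂ) :
    (S.map f).sum = ∑ d : ZMod n, (S.count d : ℂ) * f d := by
  induction S using Multiset.induction with
  | empty => simp
  | cons a s ih =>
      simp only [Multiset.map_cons, Multiset.sum_cons, ih, Multiset.count_cons]
      push_cast
      rw [Finset.sum_congr rfl (fun d _ => add_mul ((s.count d : ℂ)) _ (f d)),
        Finset.sum_add_distrib]
      have : ∑ d : ZMod n, (if d = a then (1:ℂ) else 0) * f d = f a := by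
        simp
      rw [this]
      ring

lemma count_map_add (c : ZMod n) (T : Multiset (ZMod n)) (d : ZMod n) :
    (T.map (c + ·)).count d = T.count (d - c) := by
  conv_lhs => rw [show d = c + (d - c) by ring]
  rw [Multiset.count_map_eq_count' _ _ (add_right_injective c)]

lemma count_pairconv (a : ZMod n) (T : Multiset (ZMod n)) (d : ZMod n) :
    (({a, -a} : Multiset (ZMod n)).bind fun x => T.map (x + ·)).count d
      = T.count (d - a) + T.count (d + a) := by
  rw [Multiset.insert_eq_cons, Multiset.cons_bind, Multiset.singleton_bind,
    Multiset.count_add, count_map_add, count_map_add, sub_neg_eq_add]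

lemma circ_mul (S T : Multiset (ZMod n)) :
    circulantAdj n S * circulantAdj n T
      = circulantAdj n (S.bind fun a => T.map (a + ·)) := by
  ext u v
  simp only [circulantAdj, Matrix.mul_apply, Matrix.of_apply, Multiset.count_bind]
  rw [Nat.cast_multiset_sum, Multiset.map_map, msum_eq]
  simp only [Function.comp_apply, count_map_add]
  refine (Fintype.sum_equiv (Equiv.addLeft u) _ _ fun d => ?_).symm
  simp only [Equiv.coe_addLeft, add_sub_cancel_left]
  rw [sub_sub]

lemma circ_trace (S : Multiset (ZMod n)) :
    (circulantAdj n S).trace = (n : ℂ) * (S.count 0 : ℕ) := by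
  simp only [Matrix.trace, Matrix.diag, circulantAdj, Matrix.of_apply, sub_self]
  rw [Finset.sum_const, Finset.card_univ, ZMod.card, nsmul_eq_mul]

lemma trace_submatrix_eq {m : Type*} [Fintype m] [DecidableEq m] (X : Matrix m m ℂ)
    (e : Equiv.Perm m) : (X.submatrix e e).trace = X.trace := by
  simp only [Matrix.trace, Matrix.diag, Matrix.submatrix_apply]
  exact Equiv.sum_comp e (fun v => X v v)

lemma charpoly_conj {m : Type*} [DecidableEq m] [Fintype m]
    (F M : Matrix m m ℂ) (hF : IsUnit F.det) :
    (F * M * F⁻¹).charpoly = M.charpoly := by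
  have h1 : F.map (C : ℂ →+* ℂ[X]) * F⁻¹.map (C : ℂ →+* ℂ[X]) = 1 := by
    rw [← Matrix.map_mul (f := (C : ℂ →+* ℂ[X])), Matrix.mul_nonsing_inv F hF]
    simp
  have h2 : Matrix.charmatrix (F * M * F⁻¹)
      = F.map (C : ℂ →+* ℂ[X]) * M.charmatrix * F⁻¹.map (C : ℂ →+* ℂ[X]) := by
    unfold Matrix.charmatrix
    rw [Matrix.mul_sub, Matrix.sub_mul]
    congr 1
    · rw [mul_assoc, (Matrix.scalar_commute (X : ℂ[X]) (Commute.all X)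
        (F⁻¹.map (C : ℂ →+* ℂ[X]))).eq, ← mul_assoc, h1, one_mul]
    · simp only [RingHom.mapMatrix_apply]
      rw [Matrix.map_mul (f := (C : ℂ →+* ℂ[X])), Matrix.map_mul (f := (C : ℂ →+* ℂ[X]))]
  have h3 : (F.map (C : ℂ →+* ℂ[X])).det * (F⁻¹.map (C : ℂ →+* ℂ[X])).det = 1 := by
    rw [← Matrix.det_mul, h1, Matrix.det_one]
  unfold Matrix.charpoly
  rw [h2, Matrix.det_mul, Matrix.det_mul, mul_right_comm, h3, one_mul]

lemma charpoly_diagonal {m : Type*} [DecidableEq m] [Fintype m] (d : m → ℂ) :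
    (Matrix.diagonal d).charpoly = ∏ i, (X - C (d i)) := by
  have h : (Matrix.diagonal d).charmatrix
      = Matrix.diagonal (fun i => (X : ℂ[X]) - C (d i)) := by
    ext i j
    by_cases hij : i = j
    · subst hij
      rw [Matrix.charmatrix_apply_eq, Matrix.diagonal_apply_eq, Matrix.diagonal_apply_eq]
    · rw [Matrix.charmatrix_apply_ne _ _ _ hij, Matrix.diagonal_apply_ne _ hij,
        Matrix.diagonal_apply_ne _ hij]
      simp
  rw [Matrix.charpoly, h, Matrix.det_diagonal]

lemma entry_transform (S : Multiset (ZMod n)) (a : ZMod n) (hane : a ≠ -a)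
    (htri : ∀ d, S.count d = 0 ∨ S.count d = 1 ∨ S.count d = 2)
    (hiff : ∀ d, S.count d = 1 ↔ d = a ∨ d = -a) :
    (Matrix.of fun u v => (circulantAdj n S u v) * (2 - circulantAdj n S u v))
      = circulantAdj n {a, -a} := by
  ext u v
  simp only [circulantAdj, Matrix.of_apply]
  have hpair : ({a, -a} : Multiset (ZMod n)).count (v - u)
      = (if v - u = -a then 1 else 0) + (if v - u = a then 1 else 0) := by
    rw [Multiset.insert_eq_cons, Multiset.count_cons, Multiset.count_singleton]
  rcases htri (v - u) with h | h | h <;> rw [h, hpair]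
  · have hne1 : ¬(v - u = a) := fun hEq => by have := (hiff _).mpr (Or.inl hEq); omega
    have hne2 : ¬(v - u = -a) := fun hEq => by have := (hiff _).mpr (Or.inr hEq); omega
    rw [if_neg hne2, if_neg hne1]
    norm_num
  · rcases (hiff _).mp h with hEq | hEq
    · have hne2 : ¬(v - u = -a) := by
        rw [hEq]
        exact fun hh => hane hh
      rw [if_neg hne2, if_pos hEq]
      norm_num
    · have hne1 : ¬(v - u = a) := by
        rw [hEq]
        exact fun hh => hane hh.symm
      rw [if_pos hEq, if_neg hne1]
      norm_num
  · have hne1 : ¬(v - u = a) := fun hEq => by have := (hiff _).mpr (Or.inl hEq); omega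
    have hne2 : ¬(v - u = -a) := fun hEq => by have := (hiff _).mpr (Or.inr hEq); omega
    rw [if_neg hne2, if_neg hne1]
    norm_num

lemma inv_trace (a : ZMod n) (S : Multiset (ZMod n)) :
    (circulantAdj n {a, -a} * (circulantAdj n {a, -a}
        * (circulantAdj n {a, -a} * circulantAdj n S))).trace
      = (n : ℂ) * ((S.count (3 * a) : ℂ) + (S.count (-(3 * a)) : ℂ)
          + 3 * (S.count a : ℂ) + 3 * (S.count (-a) : ℂ)) := by
  rw [circ_mul, circ_mul, circ_mul, circ_trace]
  congr 1
  simp only [count_pairconv]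
  rw [show (0 : ZMod n) - a - a - a = -(3 * a) by ring,
    show (0 : ZMod n) - a - a + a = -a by ring,
    show (0 : ZMod n) - a + a - a = -a by ring,
    show (0 : ZMod n) - a + a + a = a by ring,
    show (0 : ZMod n) + a - a - a = -a by ring,
    show (0 : ZMod n) + a - a + a = a by ring,
    show (0 : ZMod n) + a + a - a = a by ring,
    show (0 : ZMod n) + a + a + a = 3 * a by ring]
  push_cast
  ring

end Generic

/-! ### Roots of unity and eigenvalues -/

noncomputable def rou (n : ℕ) : ℂ := Complex.exp (2 * Real.pi * Complex.I / n)

noncomputable def eig (n : ℕ) [NeZero n] (k : ℕ) (S : Multiset (ZMod n)) : ℂ :=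
  (S.map fun s => rou n ^ (k * s.val)).sum

section Rou

variable {n : ℕ} [NeZero n]

lemma rou_prim : IsPrimitiveRoot (rou n) n :=
  Complex.isPrimitiveRoot_exp n (NeZero.ne n)

lemma rou_ne_zero : rou n ≠ 0 := Complex.exp_ne_zero _

lemma rou_pow_mod (a : ℕ) : rou n ^ a = rou n ^ (a % n) := by
  conv_lhs => rw [← Nat.div_add_mod a n]
  rw [pow_add, pow_mul, (rou_prim (n := n)).pow_eq_one, one_pow, one_mul]

lemma rou_congr {a b : ℕ} (h : a % n = b % n) : rou n ^ a = rou n ^ b := by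
  rw [rou_pow_mod a, rou_pow_mod b, h]

lemma chi_add (k : ℕ) (x y : ZMod n) :
    rou n ^ (k * (x + y).val) = rou n ^ (k * x.val) * rou n ^ (k * y.val) := by
  rw [← pow_add]
  apply rou_congr
  have h : (k * ((x.val + y.val) % n)) % n = (k * (x.val + y.val)) % n :=
    (Nat.mod_modEq (x.val + y.val) n).mul_left k
  calc (k * (x + y).val) % n = (k * ((x.val + y.val) % n)) % n := by rw [ZMod.val_add]
    _ = (k * (x.val + y.val)) % n := h
    _ = (k * x.val + k * y.val) % n := by ring_nf

lemma chi_zero (k : ℕ) : rou n ^ (k * (0 : ZMod n).val) = 1 := by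
  rw [ZMod.val_zero, mul_zero, pow_zero]

lemma chi_neg (k : ℕ) (x : ZMod n) :
    rou n ^ (k * (-x).val) = (rou n ^ (k * x.val))⁻¹ := by
  have h : rou n ^ (k * (-x).val) * rou n ^ (k * x.val) = 1 := by
    rw [← chi_add k (-x) x, neg_add_cancel, chi_zero]
  exact eq_inv_of_mul_eq_one_left h

lemma chi_natCast (k a : ℕ) : rou n ^ (k * ((a : ℕ) : ZMod n).val) = rou n ^ (k * a) := by
  apply rou_congr
  have h : (k * (a % n)) % n = (k * a) % n := (Nat.mod_modEq a n).mul_left k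
  rw [ZMod.val_natCast]
  exact h

lemma eig_mod (a : ℕ) (S : Multiset (ZMod n)) : eig n a S = eig n (a % n) S := by
  unfold eig
  congr 1
  apply Multiset.map_congr rfl
  intro s _
  exact (rou_congr (((Nat.mod_modEq a n).mul_right s.val))).symm

lemma eig_sym (k : ℕ) (Sf : Finset (ZMod n)) :
    eig n k (Sf.val + Sf.val.map fun a => -a)
      = (∑ x ∈ Sf, rou n ^ (k * x.val)) + ∑ x ∈ Sf, rou n ^ (k * (-x).val) := by
  unfold eig
  rw [Multiset.map_add, Multiset.sum_add, Multiset.map_map]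
  rfl

/-- Characteristic polynomial of a circulant matrix. -/
lemma circ_charpoly (S : Multiset (ZMod n)) :
    (circulantAdj n S).charpoly = ∏ k : ZMod n, (X - C (eig n k.val S)) := by
  classical
  set F : Matrix (ZMod n) (ZMod n) ℂ :=
    Matrix.of (fun u k : ZMod n => rou n ^ (u.val * k.val)) with hFdef
  have h1 : ∀ (u d k : ZMod n),
      rou n ^ ((u + d).val * k.val) = rou n ^ (u.val * k.val) * rou n ^ (d.val * k.val) := by
    intro u d k
    rw [← pow_add]
    apply rou_congr
    have h : ((u.val + d.val) % n * k.val) % n = ((u.val + d.val) * k.val) % n :=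
      (Nat.mod_modEq (u.val + d.val) n).mul_right k.val
    calc ((u + d).val * k.val) % n = ((u.val + d.val) % n * k.val) % n := by rw [ZMod.val_add]
      _ = ((u.val + d.val) * k.val) % n := h
      _ = (u.val * k.val + d.val * k.val) % n := by ring_nf
  have hMF : circulantAdj n S * F
      = F * Matrix.diagonal (fun k : ZMod n => eig n k.val S) := by
    ext u k
    rw [Matrix.mul_apply, Matrix.mul_diagonal]
    have lhs : ∑ v : ZMod n, circulantAdj n S u v * F v k
        = ∑ d : ZMod n, (S.count d : ℂ) * rou n ^ ((u + d).val * k.val) := by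
      refine (Fintype.sum_equiv (Equiv.addLeft u) _ _ fun d => ?_).symm
      simp only [Equiv.coe_addLeft, circulantAdj, Matrix.of_apply, hFdef]
      rw [add_sub_cancel_left]
    rw [lhs]
    have rhs : eig n k.val S = ∑ d : ZMod n, (S.count d : ℂ) * rou n ^ (k.val * d.val) := by
      unfold eig
      rw [msum_eq]
    rw [rhs, hFdef]
    simp only [Matrix.of_apply]
    rw [Finset.mul_sum]
    refine Finset.sum_congr rfl fun d _ => ?_
    rw [h1 u d k, mul_comm k.val d.val]
    ring
  have hdet : IsUnit F.det := by
    let e : Fin n ≃ ZMod n :=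
      ⟨fun a => ((a : ℕ) : ZMod n), fun d => ⟨d.val, d.val_lt⟩,
        fun a => Fin.ext (by simp [ZMod.val_cast_of_lt a.isLt]),
        fun d => by simp [ZMod.natCast_zmod_val]⟩
    have he : ∀ a : Fin n, e a = ((a : ℕ) : ZMod n) := fun a => rfl
    have hsub : F.submatrix e e = Matrix.vandermonde (fun a : Fin n => rou n ^ (a : ℕ)) := by
      ext a b
      simp only [Matrix.submatrix_apply, hFdef, Matrix.of_apply, Matrix.vandermonde, he]
      rw [ZMod.val_cast_of_lt a.isLt, ZMod.val_cast_of_lt b.isLt, pow_mul]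
    have hne : F.det ≠ 0 := by
      rw [← Matrix.det_submatrix_equiv_self e, hsub, Matrix.det_vandermonde]
      refine Finset.prod_ne_zero_iff.mpr fun i _ => Finset.prod_ne_zero_iff.mpr fun j hj => ?_
      rw [Finset.mem_Ioi] at hj
      refine sub_ne_zero_of_ne fun hEq => ?_
      have := (rou_prim (n := n)).pow_inj j.isLt i.isLt hEq
      exact absurd (Fin.ext this) (ne_of_gt hj)
    exact isUnit_iff_ne_zero.mpr hne
  have hM : circulantAdj n S
      = F * Matrix.diagonal (fun k : ZMod n => eig n k.val S) * F⁻¹ := by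
    rw [← hMF, Matrix.mul_assoc, Matrix.mul_nonsing_inv F hdet, Matrix.mul_one]
  rw [hM, charpoly_conj _ _ hdet, charpoly_diagonal]

end Rou

/-! ### Specific lemmas for `n = 4p`, `p = 2t+1` -/

section Specific

variable {p t n : ℕ} [NeZero n]

lemma rou_half (hn : n = 4 * p) (hp0 : 0 < p) : rou n ^ (2 * p) = -1 := by
  unfold rou
  rw [← Complex.exp_nat_mul]
  have h4 : ((4 * p : ℕ) : ℂ) ≠ 0 := Nat.cast_ne_zero.mpr (by omega)
  have hpc : ((p : ℕ) : ℂ) ≠ 0 := Nat.cast_ne_zero.mpr (by omega)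
  have harg : ((2 * p : ℕ) : ℂ) * (2 * Real.pi * Complex.I / (n : ℕ)) =
      Real.pi * Complex.I := by
    subst hn
    push_cast
    field_simp
    push_cast
    ring
  rw [harg, Complex.exp_pi_mul_I]

lemma geom_tail (t : ℕ) (c : ℂ) :
    ∑ j ∈ Finset.Icc 1 t, c ^ j = (∑ i ∈ Finset.range (t + 1), c ^ i) - 1 := by
  have h : Finset.range (t + 1) = insert 0 (Finset.Icc 1 t) := by
    ext x
    simp only [Finset.mem_range, Finset.mem_insert, Finset.mem_Icc]
    omega
  rw [h, Finset.sum_insert (by simp), pow_zero]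
  ring

lemma f_plus_f' {t : ℕ} {z : ℂ} (hz0 : z ≠ 0) (hz1 : z ≠ 1)
    (hzp : z ^ (2 * t + 1) = 1) :
    (∑ i ∈ Finset.range (t + 1), z ^ i) + (∑ i ∈ Finset.range (t + 1), (z⁻¹) ^ i) = 1 := by
  have hzero : ∑ j ∈ Finset.range (2 * t + 1), z ^ j = 0 := by
    rw [geom_sum_eq hz1, hzp, sub_self, zero_div]
  have h1 : z ^ t * (∑ i ∈ Finset.range (t + 1), (z⁻¹) ^ i)
      = ∑ i ∈ Finset.range (t + 1), z ^ i := by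
    rw [Finset.mul_sum, ← Finset.sum_range_reflect (fun i => z ^ i) (t + 1)]
    refine Finset.sum_congr rfl fun i hi => ?_
    rw [Finset.mem_range] at hi
    rw [inv_pow, show t + 1 - 1 - i = t - i by omega,
      pow_sub₀ z hz0 (by omega : i ≤ t)]
  have h3 : z ^ t * (∑ i ∈ Finset.range (t + 1), z ^ i)
      = z ^ t + ∑ i ∈ Finset.range t, z ^ (t + 1 + i) := by
    rw [Finset.mul_sum, Finset.sum_range_succ' (fun i => z ^ t * z ^ i) t]
    simp only [pow_zero, mul_one]
    rw [add_comm]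
    congr 1
    refine Finset.sum_congr rfl fun i _ => ?_
    rw [← pow_add]
    congr 1
    omega
  have hsplit : ∑ j ∈ Finset.range (2 * t + 1), z ^ j
      = (∑ j ∈ Finset.range (t + 1), z ^ j) + ∑ i ∈ Finset.range t, z ^ (t + 1 + i) := by
    rw [show 2 * t + 1 = (t + 1) + t by omega, Finset.sum_range_add]
  have hcan : z ^ t * ((∑ i ∈ Finset.range (t + 1), z ^ i)
      + (∑ i ∈ Finset.range (t + 1), (z⁻¹) ^ i)) = z ^ t * 1 := by
    rw [mul_add, h1, h3, mul_one]
    have hz2 : (∑ j ∈ Finset.range (t + 1), z ^ j) + ∑ i ∈ Finset.range t, z ^ (t + 1 + i) = 0 := by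
      rw [← hsplit]; exact hzero
    linear_combination hz2
  exact mul_left_cancel₀ (pow_ne_zero t hz0) hcan

lemma sumA_split (hpt : p = 2 * t + 1) (hn : n = 4 * p) (F : ZMod n → ℂ) :
    ∑ x ∈ connA4 n p, F x
      = (∑ i ∈ Finset.range (t + 1), F ((1 + 4 * i : ℕ) : ZMod n))
        + ∑ j ∈ Finset.Icc 1 t, F ((1 + 4 * j + n / 2 : ℕ) : ZMod n) := by
  have hq : (p - 1) / 2 = t := by omega
  have hn2 : n / 2 = 2 * p := by omega
  have v1 : ∀ i : ℕ, i ≤ t → (((1 + 4 * i : ℕ) : ZMod n)).val = 1 + 4 * i :=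
    fun i hi => ZMod.val_cast_of_lt (by omega)
  have v2 : ∀ j : ℕ, j ≤ t → (((1 + 4 * j + n / 2 : ℕ) : ZMod n)).val = 1 + 4 * j + n / 2 :=
    fun j hj => ZMod.val_cast_of_lt (by omega)
  unfold connA4
  rw [hq, Finset.sum_union ?hd, Finset.sum_image ?h1, Finset.sum_image ?h2]
  case hd =>
    rw [Finset.disjoint_left]
    rintro x hx1 hx2
    obtain ⟨i, hi, rfl⟩ := Finset.mem_image.mp hx1
    obtain ⟨j, hj, hji⟩ := Finset.mem_image.mp hx2
    rw [Finset.mem_range] at hi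
    rw [Finset.mem_Icc] at hj
    have hv := congrArg ZMod.val hji
    rw [v2 j hj.2, v1 i (by omega)] at hv
    omega
  case h1 =>
    intro i hi i' hi' hEq
    rw [Finset.mem_coe, Finset.mem_range] at hi hi'
    have hv := congrArg ZMod.val hEq
    rw [v1 i (by omega), v1 i' (by omega)] at hv
    omega
  case h2 =>
    intro j hj j' hj' hEq
    rw [Finset.mem_coe, Finset.mem_Icc] at hj hj'
    have hv := congrArg ZMod.val hEq
    rw [v2 j hj.2, v2 j' hj'.2] at hv
    omega

lemma one_val (hpt : p = 2 * t + 1) (hn : n = 4 * p) : (1 : ZMod n).val = 1 := by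
  rw [← Nat.cast_one]
  exact ZMod.val_cast_of_lt (by omega)

lemma Bgen1 (hpt : p = 2 * t + 1) (hn : n = 4 * p) {i : ℕ} (hi : i ≤ t) :
    (1 : ZMod n) - ((4 * i : ℕ) : ZMod n) = ((8 * t + 5 - 4 * i : ℕ) : ZMod n) := by
  have h : ((8 * t + 5 - 4 * i : ℕ) : ZMod n) + ((4 * i : ℕ) : ZMod n) = 1 := by
    rw [← Nat.cast_add, show 8 * t + 5 - 4 * i + 4 * i = n + 1 by omega, Nat.cast_add,
      ZMod.natCast_self, zero_add, Nat.cast_one]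
  exact (eq_sub_of_add_eq h).symm

lemma Bgen2 (hpt : p = 2 * t + 1) (hn : n = 4 * p) {j : ℕ} (hj1 : 1 ≤ j) (hj : j ≤ t) :
    (1 : ZMod n) - ((4 * j : ℕ) : ZMod n) + ((n / 2 : ℕ) : ZMod n)
      = ((4 * t + 3 - 4 * j : ℕ) : ZMod n) := by
  rw [Bgen1 hpt hn hj, ← Nat.cast_add,
    show (8 * t + 5 - 4 * j) + n / 2 = n + (4 * t + 3 - 4 * j) by omega, Nat.cast_add,
    ZMod.natCast_self, zero_add]

lemma Bval1 (hpt : p = 2 * t + 1) (hn : n = 4 * p) {i : ℕ} (hi : i ≤ t) :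
    ((1 : ZMod n) - ((4 * i : ℕ) : ZMod n)).val = if i = 0 then 1 else 8 * t + 5 - 4 * i := by
  rcases Nat.eq_zero_or_pos i with rfl | hpos
  · simp only [Nat.mul_zero, Nat.cast_zero, sub_zero, if_pos rfl]
    exact one_val hpt hn
  · rw [Bgen1 hpt hn hi, if_neg (by omega)]
    exact ZMod.val_cast_of_lt (by omega)

lemma Bval2 (hpt : p = 2 * t + 1) (hn : n = 4 * p) {j : ℕ} (hj1 : 1 ≤ j) (hj : j ≤ t) :
    ((1 : ZMod n) - ((4 * j : ℕ) : ZMod n) + ((n / 2 : ℕ) : ZMod n)).val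
      = 4 * t + 3 - 4 * j := by
  rw [Bgen2 hpt hn hj1 hj]
  exact ZMod.val_cast_of_lt (by omega)

lemma sumB_split (hpt : p = 2 * t + 1) (hn : n = 4 * p) (F : ZMod n → ℂ) :
    ∑ x ∈ connB4 n p, F x
      = (∑ i ∈ Finset.range (t + 1), F ((1 : ZMod n) - ((4 * i : ℕ) : ZMod n)))
        + ∑ j ∈ Finset.Icc 1 t, F ((1 : ZMod n) - ((4 * j : ℕ) : ZMod n) + ((n / 2 : ℕ) : ZMod n)) := by
  have hq : (p - 1) / 2 = t := by omega
  unfold connB4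
  rw [hq, Finset.sum_union ?hd, Finset.sum_image ?h1, Finset.sum_image ?h2]
  case hd =>
    rw [Finset.disjoint_left]
    rintro x hx1 hx2
    obtain ⟨i, hi, rfl⟩ := Finset.mem_image.mp hx1
    obtain ⟨j, hj, hji⟩ := Finset.mem_image.mp hx2
    rw [Finset.mem_range] at hi
    rw [Finset.mem_Icc] at hj
    have hv := congrArg ZMod.val hji
    rw [Bval2 hpt hn hj.1 hj.2, Bval1 hpt hn (by omega : i ≤ t)] at hv
    split_ifs at hv <;> omega
  case h1 =>
    intro i hi i' hi' hEq
    rw [Finset.mem_coe, Finset.mem_range] at hi hi'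
    have hv := congrArg ZMod.val hEq
    rw [Bval1 hpt hn (by omega : i ≤ t), Bval1 hpt hn (by omega : i' ≤ t)] at hv
    split_ifs at hv <;> omega
  case h2 =>
    intro j hj j' hj' hEq
    rw [Finset.mem_coe, Finset.mem_Icc] at hj hj'
    have hv := congrArg ZMod.val hEq
    rw [Bval2 hpt hn hj.1 hj.2, Bval2 hpt hn hj'.1 hj'.2] at hv
    omega


/-! ### Eigenvalue formulas -/

lemma term_A1 (hpt : p = 2 * t + 1) (hn : n = 4 * p) (k i : ℕ) :
    rou n ^ (k * (((1 + 4 * i : ℕ) : ZMod n)).val)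
      = rou n ^ k * (rou n ^ (4 * k)) ^ i := by
  rw [chi_natCast, show k * (1 + 4 * i) = k + (4 * k) * i by ring, pow_add, pow_mul]

lemma term_A2 (hpt : p = 2 * t + 1) (hn : n = 4 * p) (k j : ℕ) :
    rou n ^ (k * (((1 + 4 * j + n / 2 : ℕ) : ZMod n)).val)
      = ((-1 : ℂ) ^ k * rou n ^ k) * (rou n ^ (4 * k)) ^ j := by
  have hn2 : n / 2 = 2 * p := by omega
  rw [chi_natCast, hn2, show k * (1 + 4 * j + 2 * p) = (k + (4 * k) * j) + (2 * p) * k by ring,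
    pow_add, pow_add, pow_mul (rou n) (4 * k) j, pow_mul (rou n) (2 * p) k,
    rou_half hn (by omega)]
  ring

lemma term_B1 (hpt : p = 2 * t + 1) (hn : n = 4 * p) (k i : ℕ) :
    rou n ^ (k * ((1 : ZMod n) - ((4 * i : ℕ) : ZMod n)).val)
      = rou n ^ k * ((rou n ^ (4 * k))⁻¹) ^ i := by
  rw [sub_eq_add_neg, chi_add k 1 (-((4 * i : ℕ) : ZMod n)), chi_neg]
  have h1 : rou n ^ (k * (1 : ZMod n).val) = rou n ^ k := by
    rw [one_val hpt hn, mul_one]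
  have h2 : rou n ^ (k * (((4 * i : ℕ) : ZMod n)).val) = (rou n ^ (4 * k)) ^ i := by
    rw [chi_natCast, show k * (4 * i) = (4 * k) * i by ring, pow_mul]
  rw [h1, h2, inv_pow]

lemma term_B2 (hpt : p = 2 * t + 1) (hn : n = 4 * p) (k j : ℕ) :
    rou n ^ (k * ((1 : ZMod n) - ((4 * j : ℕ) : ZMod n) + ((n / 2 : ℕ) : ZMod n)).val)
      = ((-1 : ℂ) ^ k * rou n ^ k) * ((rou n ^ (4 * k))⁻¹) ^ j := by
  have hn2 : n / 2 = 2 * p := by omega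
  rw [chi_add k _ (((n / 2 : ℕ) : ZMod n)), term_B1 hpt hn k j, chi_natCast, hn2,
    show k * (2 * p) = (2 * p) * k by ring, pow_mul (rou n) (2 * p) k,
    rou_half hn (by omega)]
  ring

lemma neg_one_pow_inv (k : ℕ) : (((-1 : ℂ) ^ k)⁻¹) = (-1 : ℂ) ^ k := by
  rw [← inv_pow]
  norm_num

lemma eigA (hpt : p = 2 * t + 1) (hn : n = 4 * p) (k : ℕ) :
    eig n k ((connA4 n p).val + (connA4 n p).val.map fun a => -a)
      = rou n ^ k * (∑ i ∈ Finset.range (t + 1), (rou n ^ (4 * k)) ^ i)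
        + ((-1 : ℂ) ^ k * rou n ^ k) * ((∑ i ∈ Finset.range (t + 1), (rou n ^ (4 * k)) ^ i) - 1)
        + ((rou n ^ k)⁻¹ * (∑ i ∈ Finset.range (t + 1), ((rou n ^ (4 * k))⁻¹) ^ i)
        + ((-1 : ℂ) ^ k * (rou n ^ k)⁻¹) * ((∑ i ∈ Finset.range (t + 1), ((rou n ^ (4 * k))⁻¹) ^ i) - 1)) := by
  rw [eig_sym]
  have hpos : ∑ x ∈ connA4 n p, rou n ^ (k * x.val)
      = rou n ^ k * (∑ i ∈ Finset.range (t + 1), (rou n ^ (4 * k)) ^ i)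
        + ((-1 : ℂ) ^ k * rou n ^ k) * ((∑ i ∈ Finset.range (t + 1), (rou n ^ (4 * k)) ^ i) - 1) := by
    rw [sumA_split hpt hn]
    rw [Finset.sum_congr rfl (fun i _ => term_A1 hpt hn k i),
      Finset.sum_congr rfl (fun j _ => term_A2 hpt hn k j),
      ← Finset.mul_sum, ← Finset.mul_sum, geom_tail]
  have hneg : ∑ x ∈ connA4 n p, rou n ^ (k * (-x).val)
      = (rou n ^ k)⁻¹ * (∑ i ∈ Finset.range (t + 1), ((rou n ^ (4 * k))⁻¹) ^ i)
        + ((-1 : ℂ) ^ k * (rou n ^ k)⁻¹) * ((∑ i ∈ Finset.range (t + 1), ((rou n ^ (4 * k))⁻¹) ^ i) - 1) := by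
    rw [Finset.sum_congr rfl (fun x _ => chi_neg k x)]
    rw [sumA_split hpt hn (fun x => (rou n ^ (k * x.val))⁻¹)]
    have t1 : ∀ i : ℕ, (rou n ^ (k * (((1 + 4 * i : ℕ) : ZMod n)).val))⁻¹
        = (rou n ^ k)⁻¹ * ((rou n ^ (4 * k))⁻¹) ^ i := by
      intro i
      rw [term_A1 hpt hn k i, mul_inv, inv_pow]
    have t2 : ∀ j : ℕ, (rou n ^ (k * (((1 + 4 * j + n / 2 : ℕ) : ZMod n)).val))⁻¹
        = ((-1 : ℂ) ^ k * (rou n ^ k)⁻¹) * ((rou n ^ (4 * k))⁻¹) ^ j := by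
      intro j
      rw [term_A2 hpt hn k j, mul_inv, mul_inv, inv_pow, neg_one_pow_inv]
    rw [Finset.sum_congr rfl (fun i _ => t1 i), Finset.sum_congr rfl (fun j _ => t2 j),
      ← Finset.mul_sum, ← Finset.mul_sum, geom_tail]
  rw [hpos, hneg]

lemma eigB (hpt : p = 2 * t + 1) (hn : n = 4 * p) (k : ℕ) :
    eig n k ((connB4 n p).val + (connB4 n p).val.map fun b => -b)
      = rou n ^ k * (∑ i ∈ Finset.range (t + 1), ((rou n ^ (4 * k))⁻¹) ^ i)
        + ((-1 : ℂ) ^ k * rou n ^ k) * ((∑ i ∈ Finset.range (t + 1), ((rou n ^ (4 * k))⁻¹) ^ i) - 1)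
        + ((rou n ^ k)⁻¹ * (∑ i ∈ Finset.range (t + 1), (rou n ^ (4 * k)) ^ i)
        + ((-1 : ℂ) ^ k * (rou n ^ k)⁻¹) * ((∑ i ∈ Finset.range (t + 1), (rou n ^ (4 * k)) ^ i) - 1)) := by
  rw [eig_sym]
  have hinvinv : ((rou n ^ (4 * k))⁻¹)⁻¹ = rou n ^ (4 * k) := inv_inv _
  have hpos : ∑ x ∈ connB4 n p, rou n ^ (k * x.val)
      = rou n ^ k * (∑ i ∈ Finset.range (t + 1), ((rou n ^ (4 * k))⁻¹) ^ i)
        + ((-1 : ℂ) ^ k * rou n ^ k) * ((∑ i ∈ Finset.range (t + 1), ((rou n ^ (4 * k))⁻¹) ^ i) - 1) := by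
    rw [sumB_split hpt hn]
    rw [Finset.sum_congr rfl (fun i _ => term_B1 hpt hn k i),
      Finset.sum_congr rfl (fun j _ => term_B2 hpt hn k j),
      ← Finset.mul_sum, ← Finset.mul_sum, geom_tail]
  have hneg : ∑ x ∈ connB4 n p, rou n ^ (k * (-x).val)
      = (rou n ^ k)⁻¹ * (∑ i ∈ Finset.range (t + 1), (rou n ^ (4 * k)) ^ i)
        + ((-1 : ℂ) ^ k * (rou n ^ k)⁻¹) * ((∑ i ∈ Finset.range (t + 1), (rou n ^ (4 * k)) ^ i) - 1) := by
    rw [Finset.sum_congr rfl (fun x _ => chi_neg k x)]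
    rw [sumB_split hpt hn (fun x => (rou n ^ (k * x.val))⁻¹)]
    have t1 : ∀ i : ℕ, (rou n ^ (k * ((1 : ZMod n) - ((4 * i : ℕ) : ZMod n)).val))⁻¹
        = (rou n ^ k)⁻¹ * (rou n ^ (4 * k)) ^ i := by
      intro i
      rw [term_B1 hpt hn k i, mul_inv, inv_pow, inv_inv]
    have t2 : ∀ j : ℕ, (rou n ^ (k * ((1 : ZMod n) - ((4 * j : ℕ) : ZMod n) + ((n / 2 : ℕ) : ZMod n)).val))⁻¹
        = ((-1 : ℂ) ^ k * (rou n ^ k)⁻¹) * (rou n ^ (4 * k)) ^ j := by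
      intro j
      rw [term_B2 hpt hn k j, mul_inv, mul_inv, inv_pow, inv_inv, neg_one_pow_inv]
    rw [Finset.sum_congr rfl (fun i _ => t1 i), Finset.sum_congr rfl (fun j _ => t2 j),
      ← Finset.mul_sum, ← Finset.mul_sum, geom_tail]
  rw [hpos, hneg]

/-! ### Membership and counting -/

lemma memA (hpt : p = 2 * t + 1) (hn : n = 4 * p) (d : ZMod n) :
    d ∈ connA4 n p ↔ (d.val % 4 = 1 ∧ d.val ≤ 4 * t + 1)
      ∨ (d.val % 4 = 3 ∧ 4 * t + 7 ≤ d.val ∧ d.val ≤ 8 * t + 3) := by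
  have hq : (p - 1) / 2 = t := by omega
  have hn2 : n / 2 = 2 * p := by omega
  have hn8 : n = 8 * t + 4 := by omega
  unfold connA4
  rw [hq, Finset.mem_union, Finset.mem_image, Finset.mem_image]
  constructor
  · rintro (⟨i, hi, rfl⟩ | ⟨j, hj, rfl⟩)
    · rw [Finset.mem_range] at hi
      rw [ZMod.val_cast_of_lt (by omega : 1 + 4 * i < n)]
      left; omega
    · rw [Finset.mem_Icc] at hj
      rw [ZMod.val_cast_of_lt (by omega : 1 + 4 * j + n / 2 < n)]
      right; omega
  · rintro (⟨h1, h2⟩ | ⟨h1, h2, h3⟩)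
    · left
      refine ⟨d.val / 4, Finset.mem_range.mpr (by omega), ?_⟩
      rw [show 1 + 4 * (d.val / 4) = d.val by omega, ZMod.natCast_zmod_val]
    · right
      refine ⟨(d.val - (4 * t + 3)) / 4, Finset.mem_Icc.mpr (by omega), ?_⟩
      rw [show 1 + 4 * ((d.val - (4 * t + 3)) / 4) + n / 2 = d.val by omega,
        ZMod.natCast_zmod_val]

lemma memB (hpt : p = 2 * t + 1) (hn : n = 4 * p) (d : ZMod n) :
    d ∈ connB4 n p ↔ d.val = 1
      ∨ (d.val % 4 = 1 ∧ 4 * t + 5 ≤ d.val ∧ d.val ≤ 8 * t + 1)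
      ∨ (d.val % 4 = 3 ∧ 3 ≤ d.val ∧ d.val ≤ 4 * t - 1) := by
  have hq : (p - 1) / 2 = t := by omega
  have hn8 : n = 8 * t + 4 := by omega
  unfold connB4
  rw [hq, Finset.mem_union, Finset.mem_image, Finset.mem_image]
  constructor
  · rintro (⟨i, hi, rfl⟩ | ⟨j, hj, rfl⟩)
    · rw [Finset.mem_range] at hi
      rw [Bval1 hpt hn (by omega : i ≤ t)]
      split_ifs with h0
      · left; rfl
      · right; left; omega
    · rw [Finset.mem_Icc] at hj
      rw [Bval2 hpt hn hj.1 hj.2]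
      right; right; omega
  · rintro (h1 | ⟨h1, h2, h3⟩ | ⟨h1, h2, h3⟩)
    · left
      refine ⟨0, Finset.mem_range.mpr (by omega), ?_⟩
      have : d = ((1 : ℕ) : ZMod n) := by
        rw [← h1, ZMod.natCast_zmod_val]
      rw [this]
      simp
    · left
      refine ⟨(8 * t + 5 - d.val) / 4, Finset.mem_range.mpr (by omega), ?_⟩
      rw [Bgen1 hpt hn (by omega : (8 * t + 5 - d.val) / 4 ≤ t),
        show 8 * t + 5 - 4 * ((8 * t + 5 - d.val) / 4) = d.val by omega,
        ZMod.natCast_zmod_val]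
    · right
      refine ⟨(4 * t + 3 - d.val) / 4, Finset.mem_Icc.mpr (by omega), ?_⟩
      rw [Bgen2 hpt hn (by omega) (by omega),
        show 4 * t + 3 - 4 * ((4 * t + 3 - d.val) / 4) = d.val by omega,
        ZMod.natCast_zmod_val]

lemma count_sym (Sf : Finset (ZMod n)) (d : ZMod n) :
    (Sf.val + Sf.val.map fun a => -a).count d
      = (if d ∈ Sf then 1 else 0) + (if -d ∈ Sf then 1 else 0) := by
  rw [Multiset.count_add]
  congr 1
  · rw [Multiset.count_eq_of_nodup Sf.nodup]
    simp [Finset.mem_val]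
  · conv_lhs => rw [show d = -(-d) by ring]
    rw [show (Multiset.map (fun a => -a) Sf.val) = Multiset.map (Neg.neg) Sf.val from rfl,
      Multiset.count_map_eq_count' _ _ neg_injective]
    rw [Multiset.count_eq_of_nodup Sf.nodup]
    simp [Finset.mem_val]

lemma cast_eq_iff_val (hpt : p = 2 * t + 1) (hn : n = 4 * p) {a : ℕ} (ha : a < n)
    (d : ZMod n) : d = ((a : ℕ) : ZMod n) ↔ d.val = a := by
  constructor
  · rintro rfl
    exact ZMod.val_cast_of_lt ha
  · intro h
    rw [← h, ZMod.natCast_zmod_val]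

lemma neg_cast_eq (hpt : p = 2 * t + 1) (hn : n = 4 * p) {a b : ℕ} (hab : a + b = n) :
    -((a : ℕ) : ZMod n) = ((b : ℕ) : ZMod n) := by
  refine neg_eq_of_add_eq_zero_right ?_
  rw [← Nat.cast_add, hab, ZMod.natCast_self]

lemma countA_one_iff (hpt : p = 2 * t + 1) (ht : 1 ≤ t) (hn : n = 4 * p) (d : ZMod n) :
    ((connA4 n p).val + (connA4 n p).val.map fun a => -a).count d = 1
      ↔ d = ((4 * t + 1 : ℕ) : ZMod n) ∨ d = ((4 * t + 3 : ℕ) : ZMod n) := by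
  have hn8 : n = 8 * t + 4 := by omega
  rw [count_sym, cast_eq_iff_val hpt hn (by omega) d, cast_eq_iff_val hpt hn (by omega) d]
  by_cases h0 : d = 0
  · subst h0
    simp only [neg_zero, memA hpt hn, ZMod.val_zero]
    split_ifs <;> simp_all <;> omega
  · have hv0 : d.val ≠ 0 := fun h => h0 ((ZMod.val_eq_zero d).mp h)
    have hvlt : d.val < n := d.val_lt
    have hnegval : (-d).val = n - d.val := by
      rw [ZMod.neg_val, if_neg h0]
    simp only [memA hpt hn, hnegval]
    split_ifs <;> omega

lemma countB_one_iff (hpt : p = 2 * t + 1) (ht : 1 ≤ t) (hn : n = 4 * p) (d : ZMod n) :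
    ((connB4 n p).val + (connB4 n p).val.map fun b => -b).count d = 1
      ↔ d = ((1 : ℕ) : ZMod n) ∨ d = ((8 * t + 3 : ℕ) : ZMod n) := by
  have hn8 : n = 8 * t + 4 := by omega
  rw [count_sym, cast_eq_iff_val hpt hn (by omega) d, cast_eq_iff_val hpt hn (by omega) d]
  by_cases h0 : d = 0
  · subst h0
    simp only [neg_zero, memB hpt hn, ZMod.val_zero]
    split_ifs <;> simp_all <;> omega
  · have hv0 : d.val ≠ 0 := fun h => h0 ((ZMod.val_eq_zero d).mp h)
    have hvlt : d.val < n := d.val_lt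
    have hnegval : (-d).val = n - d.val := by
      rw [ZMod.neg_val, if_neg h0]
    simp only [memB hpt hn, hnegval]
    split_ifs <;> omega

lemma count_at_val (hpt : p = 2 * t + 1) (hn : n = 4 * p) (Sf : Finset (ZMod n))
    {a b : ℕ} (ha : a < n) (hb : b < n) (hab : a + b = n) :
    (Sf.val + Sf.val.map fun x => -x).count ((a : ℕ) : ZMod n)
      = (if ((a : ℕ) : ZMod n) ∈ Sf then 1 else 0)
        + (if ((b : ℕ) : ZMod n) ∈ Sf then 1 else 0) := by
  rw [count_sym, neg_cast_eq hpt hn hab]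


/-! ### The eigenvalue-permuting involution -/

lemma tw_invol (hpt : p = 2 * t + 1) (hn : n = 4 * p) :
    Function.Involutive (fun k : ZMod n =>
      if k.val % 2 = 0 ∧ ¬ p ∣ k.val then k + ((2 * p : ℕ) : ZMod n) else k) := by
  intro k
  have h2p : (((2 * p : ℕ) : ZMod n)).val = 2 * p := ZMod.val_cast_of_lt (by omega)
  by_cases hc : k.val % 2 = 0 ∧ ¬ p ∣ k.val
  · simp only [if_pos hc]
    have hval : (k + ((2 * p : ℕ) : ZMod n)).val = (k.val + 2 * p) % n := by
      rw [ZMod.val_add, h2p]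
    have hklt : k.val < n := k.val_lt
    have hmod : (k.val + 2 * p) % n = k.val + 2 * p ∨
        (k.val + 2 * p) % n = k.val + 2 * p - n := by
      rcases Nat.lt_or_ge (k.val + 2 * p) n with h | h
      · exact Or.inl (Nat.mod_eq_of_lt h)
      · right
        rw [Nat.mod_eq_sub_mod h]
        exact Nat.mod_eq_of_lt (by omega)
    have hp2p : p ∣ 2 * p := ⟨2, by ring⟩
    have hpn : p ∣ n := ⟨4, by omega⟩
    have hc2 : (k + ((2 * p : ℕ) : ZMod n)).val % 2 = 0
        ∧ ¬ p ∣ (k + ((2 * p : ℕ) : ZMod n)).val := by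
      constructor
      · rw [hval]
        rcases hmod with h | h <;> omega
      · rw [hval, Nat.dvd_mod_iff hpn]
        intro hd
        have := Nat.dvd_sub hd hp2p
        simp only [Nat.add_sub_cancel] at this
        exact hc.2 this
    rw [if_pos hc2, add_assoc, ← Nat.cast_add, show 2 * p + (2 * p) = n by omega,
      ZMod.natCast_self, add_zero]
  · simp only [if_neg hc]

lemma eig_main (hpt : p = 2 * t + 1) (ht : 1 ≤ t) (hn : n = 4 * p) (k : ZMod n) :
    eig n ((if k.val % 2 = 0 ∧ ¬ p ∣ k.val then k + ((2 * p : ℕ) : ZMod n) else k)).val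
        ((connA4 n p).val + (connA4 n p).val.map fun a => -a)
      = eig n k.val ((connB4 n p).val + (connB4 n p).val.map fun b => -b) := by
  by_cases hc : k.val % 2 = 0 ∧ ¬ p ∣ k.val
  · obtain ⟨hev, hnd⟩ := hc
    rw [if_pos ⟨hev, hnd⟩]
    have h2p : (((2 * p : ℕ) : ZMod n)).val = 2 * p := ZMod.val_cast_of_lt (by omega)
    have hval : (k + ((2 * p : ℕ) : ZMod n)).val = (k.val + 2 * p) % n := by
      rw [ZMod.val_add, h2p]
    rw [hval, ← eig_mod, eigA hpt hn, eigB hpt hn]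
    obtain ⟨m, hm⟩ : ∃ m, k.val = m := ⟨k.val, rfl⟩
    rw [hm] at hev hnd ⊢
    have hw : rou n ^ (m + 2 * p) = - rou n ^ m := by
      rw [pow_add, rou_half hn (by omega)]
      ring
    have hz4 : rou n ^ (4 * (m + 2 * p)) = rou n ^ (4 * m) := by
      rw [show 4 * (m + 2 * p) = 4 * m + n * 2 by omega, pow_add,
        pow_mul (rou n) n 2, (rou_prim (n := n)).pow_eq_one, one_pow, mul_one]
    have heps' : (-1 : ℂ) ^ (m + 2 * p) = 1 := by
      refine Even.neg_one_pow ?_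
      exact (Nat.even_iff.mpr hev).add ⟨p, by ring⟩
    have heps : (-1 : ℂ) ^ (m) = 1 := Even.neg_one_pow (Nat.even_iff.mpr hev)
    rw [hz4, hw, heps', heps, inv_neg]
    have hz0 : rou n ^ (4 * m) ≠ 0 := pow_ne_zero _ rou_ne_zero
    have hz1 : rou n ^ (4 * m) ≠ 1 := by
      intro hEq
      have hdvd : n ∣ 4 * m := ((rou_prim (n := n)).pow_eq_one_iff_dvd _).mp hEq
      obtain ⟨c, hc'⟩ := hdvd
      rw [hn, mul_assoc] at hc'
      exact hnd ⟨c, Nat.eq_of_mul_eq_mul_left (by norm_num) hc'⟩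
    have hzp : (rou n ^ (4 * m)) ^ (2 * t + 1) = 1 := by
      rw [← pow_mul, show 4 * m * (2 * t + 1) = n * m from by
          rw [show n = 4 * (2 * t + 1) by omega]; ring, pow_mul,
        (rou_prim (n := n)).pow_eq_one, one_pow]
    have hf := f_plus_f' hz0 hz1 hzp
    linear_combination (-2 * (rou n ^ m + (rou n ^ m)⁻¹)) * hf
  · rw [if_neg hc]
    rw [eigA hpt hn, eigB hpt hn]
    by_cases hpar : k.val % 2 = 0
    · have hdvd : p ∣ k.val := by tauto
      have hz : rou n ^ (4 * k.val) = 1 := by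
        refine ((rou_prim (n := n)).pow_eq_one_iff_dvd _).mpr ?_
        obtain ⟨c, hc'⟩ := hdvd
        exact ⟨c, by rw [hc', hn]; ring⟩
      rw [hz, inv_one]
    · have hodd : Odd k.val := Nat.odd_iff.mpr (by omega)
      rw [hodd.neg_one_pow]
      ring

lemma count_sym_tri (Sf : Finset (ZMod n)) (d : ZMod n) :
    (Sf.val + Sf.val.map fun a => -a).count d = 0
      ∨ (Sf.val + Sf.val.map fun a => -a).count d = 1
      ∨ (Sf.val + Sf.val.map fun a => -a).count d = 2 := by
  rw [count_sym]
  split_ifs <;> omega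

lemma countA_3g (hpt : p = 2 * t + 1) (ht : 1 ≤ t) (hn : n = 4 * p) :
    ((connA4 n p).val + (connA4 n p).val.map fun a => -a).count
      (((4 * t - 1 : ℕ)) : ZMod n) = 0 := by
  have hn8 : n = 8 * t + 4 := by omega
  have h1 : ¬ ((((4 * t - 1 : ℕ)) : ZMod n) ∈ connA4 n p) := by
    simp only [memA hpt hn, ZMod.val_cast_of_lt (show 4 * t - 1 < n by omega)]
    omega
  have h2 : ¬ ((((4 * t + 5 : ℕ)) : ZMod n) ∈ connA4 n p) := by
    simp only [memA hpt hn, ZMod.val_cast_of_lt (show 4 * t + 5 < n by omega)]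
    omega
  rw [count_at_val hpt hn _ (by omega) (by omega) (by omega : 4 * t - 1 + (4 * t + 5) = n),
    if_neg h1, if_neg h2]

lemma countA_3g' (hpt : p = 2 * t + 1) (ht : 1 ≤ t) (hn : n = 4 * p) :
    ((connA4 n p).val + (connA4 n p).val.map fun a => -a).count
      (((4 * t + 5 : ℕ)) : ZMod n) = 0 := by
  have hn8 : n = 8 * t + 4 := by omega
  have h1 : ¬ ((((4 * t + 5 : ℕ)) : ZMod n) ∈ connA4 n p) := by
    simp only [memA hpt hn, ZMod.val_cast_of_lt (show 4 * t + 5 < n by omega)]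
    omega
  have h2 : ¬ ((((4 * t - 1 : ℕ)) : ZMod n) ∈ connA4 n p) := by
    simp only [memA hpt hn, ZMod.val_cast_of_lt (show 4 * t - 1 < n by omega)]
    omega
  rw [count_at_val hpt hn _ (by omega) (by omega) (by omega : 4 * t + 5 + (4 * t - 1) = n),
    if_neg h1, if_neg h2]

lemma countB_3 (hpt : p = 2 * t + 1) (ht : 1 ≤ t) (hn : n = 4 * p) :
    ((connB4 n p).val + (connB4 n p).val.map fun b => -b).count
      (((3 : ℕ)) : ZMod n) = 2 := by
  have hn8 : n = 8 * t + 4 := by omega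
  have h1 : (((3 : ℕ)) : ZMod n) ∈ connB4 n p := by
    rw [memB hpt hn, ZMod.val_cast_of_lt (show (3 : ℕ) < n by omega)]
    omega
  have h2 : (((8 * t + 1 : ℕ)) : ZMod n) ∈ connB4 n p := by
    rw [memB hpt hn, ZMod.val_cast_of_lt (show 8 * t + 1 < n by omega)]
    omega
  rw [count_at_val hpt hn _ (by omega) (by omega) (by omega : 3 + (8 * t + 1) = n),
    if_pos h1, if_pos h2]

lemma countB_3' (hpt : p = 2 * t + 1) (ht : 1 ≤ t) (hn : n = 4 * p) :
    ((connB4 n p).val + (connB4 n p).val.map fun b => -b).count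
      (((8 * t + 1 : ℕ)) : ZMod n) = 2 := by
  have hn8 : n = 8 * t + 4 := by omega
  have h1 : (((3 : ℕ)) : ZMod n) ∈ connB4 n p := by
    rw [memB hpt hn, ZMod.val_cast_of_lt (show (3 : ℕ) < n by omega)]
    omega
  have h2 : (((8 * t + 1 : ℕ)) : ZMod n) ∈ connB4 n p := by
    rw [memB hpt hn, ZMod.val_cast_of_lt (show 8 * t + 1 < n by omega)]
    omega
  rw [count_at_val hpt hn _ (by omega) (by omega) (by omega : 8 * t + 1 + 3 = n),
    if_pos h2, if_pos h1]


end Specific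

end Circ4pAux

/-- For `n = 4p` with `p` an odd prime, the circulant multigraphs with connection
multisets `Ã = A ⊎ (−A)` and `B̃ = B ⊎ (−B)` are isospectral but not isomorphic. -/
theorem symmetrized_construction_n4p (p : ℕ) (hp : p.Prime) (hodd : Odd p)
    (n : ℕ) [NeZero n] (hn : n = 4 * p) :
    (circulantAdj n
        ((connA4 n p).val + (connA4 n p).val.map fun a => -a)).charpoly =
      (circulantAdj n
        ((connB4 n p).val + (connB4 n p).val.map fun b => -b)).charpoly ∧
    ¬ ∃ e : Equiv.Perm (ZMod n),
        circulantAdj n ((connB4 n p).val + (connB4 n p).val.map fun b => -b) =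
          (circulantAdj n
            ((connA4 n p).val + (connA4 n p).val.map fun a => -a)).submatrix e e := by
  subst hn
  obtain ⟨t, rfl⟩ := hodd
  have hpt : 2 * t + 1 = 2 * t + 1 := rfl
  have ht : 1 ≤ t := by have := hp.two_le; omega
  set p := 2 * t + 1 with hpdef
  have hptm : p = 2 * t + 1 := rfl
  have hnn : 4 * p = 4 * p := rfl
  have hn8 : 4 * p = 8 * t + 4 := by omega
  constructor
  · -- isospectral
    rw [Circ4pAux.circ_charpoly, Circ4pAux.circ_charpoly]
    have hinv := Circ4pAux.tw_invol (p := p) (t := t) (n := 4 * p) hptm hnn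
    have hperm := Equiv.prod_comp (Function.Involutive.toPerm _ hinv)
      (fun k : ZMod (4 * p) => (X : ℂ[X]) - C (Circ4pAux.eig (4 * p) k.val
        ((connA4 (4 * p) p).val + (connA4 (4 * p) p).val.map fun a => -a)))
    rw [← hperm]
    refine Finset.prod_congr rfl fun k _ => ?_
    have htp : (Function.Involutive.toPerm _ hinv) k
        = (if k.val % 2 = 0 ∧ ¬ p ∣ k.val then k + ((2 * p : ℕ) : ZMod (4 * p)) else k) := rfl
    rw [htp, Circ4pAux.eig_main hptm ht hnn k]
  · -- not isomorphic
    rintro ⟨e, he⟩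
    have hn0 : ((4 * p : ℕ) : ℂ) ≠ 0 := Nat.cast_ne_zero.mpr (by omega)
    set gA : ZMod (4 * p) := ((4 * t + 1 : ℕ) : ZMod (4 * p)) with hgAdef
    have hgAneg : -gA = ((4 * t + 3 : ℕ) : ZMod (4 * p)) :=
      Circ4pAux.neg_cast_eq hptm hnn (by omega)
    have hgA3 : 3 * gA = ((4 * t - 1 : ℕ) : ZMod (4 * p)) := by
      have h1 : 3 * gA = ((3 * (4 * t + 1) : ℕ) : ZMod (4 * p)) := by
        rw [hgAdef]
        push_cast
        ring
      rw [h1, show 3 * (4 * t + 1) = 4 * p + (4 * t - 1) by omega, Nat.cast_add,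
        ZMod.natCast_self, zero_add]
    have hgA3neg : -(3 * gA) = ((4 * t + 5 : ℕ) : ZMod (4 * p)) := by
      rw [hgA3]
      exact Circ4pAux.neg_cast_eq hptm hnn (by omega)
    have hone : (1 : ZMod (4 * p)) = ((1 : ℕ) : ZMod (4 * p)) := by norm_cast
    have honeneg : -(1 : ZMod (4 * p)) = ((8 * t + 3 : ℕ) : ZMod (4 * p)) := by
      rw [hone]
      exact Circ4pAux.neg_cast_eq hptm hnn (by omega)
    have h31 : 3 * (1 : ZMod (4 * p)) = ((3 : ℕ) : ZMod (4 * p)) := by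
      push_cast
      ring
    have h31neg : -(3 * (1 : ZMod (4 * p))) = ((8 * t + 1 : ℕ) : ZMod (4 * p)) := by
      rw [h31]
      exact Circ4pAux.neg_cast_eq hptm hnn (by omega)
    have hganeq : gA ≠ -gA := by
      rw [hgAneg, hgAdef]
      intro h
      have hv := congrArg ZMod.val h
      rw [ZMod.val_cast_of_lt (by omega), ZMod.val_cast_of_lt (by omega)] at hv
      omega
    have honeneq : (1 : ZMod (4 * p)) ≠ -(1 : ZMod (4 * p)) := by
      rw [honeneg, hone]
      intro h
      have hv := congrArg ZMod.val h
      rw [ZMod.val_cast_of_lt (by omega), ZMod.val_cast_of_lt (by omega)] at hv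
      omega
    have hiffA : ∀ d, ((connA4 (4 * p) p).val
        + (connA4 (4 * p) p).val.map fun a => -a).count d = 1 ↔ d = gA ∨ d = -gA := by
      intro d
      rw [Circ4pAux.countA_one_iff hptm ht hnn d, hgAneg, hgAdef]
    have hiffB : ∀ d, ((connB4 (4 * p) p).val
        + (connB4 (4 * p) p).val.map fun b => -b).count d = 1
          ↔ d = (1 : ZMod (4 * p)) ∨ d = -(1 : ZMod (4 * p)) := by
      intro d
      rw [Circ4pAux.countB_one_iff hptm ht hnn d, honeneg, hone]
    have hTA := Circ4pAux.entry_transform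
      ((connA4 (4 * p) p).val + (connA4 (4 * p) p).val.map fun a => -a) gA hganeq
      (Circ4pAux.count_sym_tri _) hiffA
    have hTB := Circ4pAux.entry_transform
      ((connB4 (4 * p) p).val + (connB4 (4 * p) p).val.map fun b => -b) (1 : ZMod (4 * p))
      honeneq (Circ4pAux.count_sym_tri _) hiffB
    have hEq2 : circulantAdj (4 * p) {(1 : ZMod (4 * p)), -(1 : ZMod (4 * p))}
        = (circulantAdj (4 * p) {gA, -gA}).submatrix e e := by
      rw [← hTB, ← hTA, he]
      rfl
    have hword : circulantAdj (4 * p) {(1 : ZMod (4 * p)), -(1 : ZMod (4 * p))}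
          * (circulantAdj (4 * p) {(1 : ZMod (4 * p)), -(1 : ZMod (4 * p))}
            * (circulantAdj (4 * p) {(1 : ZMod (4 * p)), -(1 : ZMod (4 * p))}
              * circulantAdj (4 * p)
                ((connB4 (4 * p) p).val + (connB4 (4 * p) p).val.map fun b => -b)))
        = (circulantAdj (4 * p) {gA, -gA} * (circulantAdj (4 * p) {gA, -gA}
            * (circulantAdj (4 * p) {gA, -gA} * circulantAdj (4 * p)
                ((connA4 (4 * p) p).val
                  + (connA4 (4 * p) p).val.map fun a => -a)))).submatrix e e := by
      rw [hEq2, he, Matrix.submatrix_mul_equiv, Matrix.submatrix_mul_equiv,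
        Matrix.submatrix_mul_equiv]
    have hmain := congrArg Matrix.trace hword
    rw [Circ4pAux.trace_submatrix_eq, Circ4pAux.inv_trace, Circ4pAux.inv_trace] at hmain
    rw [h31neg, h31, honeneg, hone, hgA3neg, hgA3, hgAneg, hgAdef] at hmain
    have c1 : ((connB4 (4 * p) p).val + (connB4 (4 * p) p).val.map fun b => -b).count
        (((1 : ℕ)) : ZMod (4 * p)) = 1 := (hiffB _).mpr (Or.inl hone.symm)
    have c2 : ((connB4 (4 * p) p).val + (connB4 (4 * p) p).val.map fun b => -b).count
        (((8 * t + 3 : ℕ)) : ZMod (4 * p)) = 1 := (hiffB _).mpr (Or.inr honeneg.symm)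
    have c3 : ((connA4 (4 * p) p).val + (connA4 (4 * p) p).val.map fun a => -a).count
        (((4 * t + 1 : ℕ)) : ZMod (4 * p)) = 1 := (hiffA _).mpr (Or.inl rfl)
    have c4 : ((connA4 (4 * p) p).val + (connA4 (4 * p) p).val.map fun a => -a).count
        (((4 * t + 3 : ℕ)) : ZMod (4 * p)) = 1 := (hiffA _).mpr (Or.inr hgAneg.symm)
    rw [Circ4pAux.countB_3 hptm ht hnn, Circ4pAux.countB_3' hptm ht hnn,
      Circ4pAux.countA_3g hptm ht hnn, Circ4pAux.countA_3g' hptm ht hnn,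
      c1, c2, c3, c4] at hmain
    push_cast at hmain
    have hpc : (p : ℂ) = 2 * (t : ℂ) + 1 := by exact_mod_cast hptm
    have hfin : (16 : ℂ) * (2 * (t : ℂ) + 1) = 0 := by linear_combination hmain - 16 * hpc
    rw [mul_eq_zero] at hfin
    rcases hfin with hfin | hfin
    · norm_num at hfin
    · have hX : (2 * (t : ℂ) + 1) = ((2 * t + 1 : ℕ) : ℂ) := by push_cast; ring
      rw [hX] at hfin
      exact (Nat.cast_ne_zero.mpr (by omega)) hfin
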